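/- Let Λ = ℤ + ℤi ⊆ ℂ be the Gaussian lattice and E = ℂ/Λ, and take ω = 2 + i and ω' = 1 − 2i (so that ω·Λ ⊆ Λ and ω'·Λ ⊆ Λ, and ω/ω' is a primitive fourth root of unity). Then the diagonal Δ ⊆ E × E satisfies ([ω] × [ω'])^{4}(Δ) = Δ but ([ω] × [ω'])^{2}(Δ) ≠ Δ; that is, Δ is pre-periodic for [ω] × [ω'] with pair (0,4) but not with pair (0,2). -/

import Mathlib

open Complex

noncomputable section

/-- The analytic model `E = ℂ/Λ` of an elliptic curve with period lattice `Λ`. -/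
abbrev EC (Λ : AddSubgroup ℂ) : Type := ℂ ⧸ Λ

/-- The endomorphism `[ω] : E → E` induced by multiplication by `ω` on `ℂ`,
for `ω` with `ω·Λ ⊆ Λ`. -/
def mulE (Λ : AddSubgroup ℂ) (ω : ℂ) (hω : ∀ x ∈ Λ, ω * x ∈ Λ) : EC Λ →+ EC Λ :=
  QuotientAddGroup.map Λ Λ (AddMonoidHom.mulLeft ω) (fun x hx => hω x hx)

/-- The relation identifying a point of `E` with its negative. -/
def negRel (Λ : AddSubgroup ℂ) (x y : EC Λ) : Prop := x = y ∨ x = -y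

/-- The quotient `E/±` of `E` by the involution `z ↦ -z`. -/
abbrev ECpm (Λ : AddSubgroup ℂ) : Type := Quot (negRel Λ)

/-- The quotient map `q : E → E/±`. -/
def qpm (Λ : AddSubgroup ℂ) : EC Λ → ECpm Λ := Quot.mk _

/-- The Lattès-type map `φ_ω : E/± → E/±` induced by `[ω]`. -/
def lattes (Λ : AddSubgroup ℂ) (ω : ℂ) (hω : ∀ x ∈ Λ, ω * x ∈ Λ) :
    ECpm Λ → ECpm Λ :=
  Quot.map (mulE Λ ω hω) (by
    intro x y h
    rcases h with h | h
    · exact Or.inl (by rw [h])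
    · exact Or.inr (by rw [h, map_neg]))


lemma mulE_mk (Λ : AddSubgroup ℂ) (ω : ℂ) (hω : ∀ x ∈ Λ, ω * x ∈ Λ) (z : ℂ) :
    mulE Λ ω hω (z : ℂ ⧸ Λ) = ((ω * z : ℂ) : ℂ ⧸ Λ) := rfl

lemma re_int_of_mem_closure {x : ℂ} (hx : x ∈ AddSubgroup.closure {(1 : ℂ), Complex.I}) :
    ∃ n : ℤ, x.re = n := by
  induction hx using AddSubgroup.closure_induction with
  | mem y hy =>
    rcases hy with rfl | rfl
    · exact ⟨1, by simp⟩
    · exact ⟨0, by simp⟩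
  | zero => exact ⟨0, by simp⟩
  | add a b _ _ ha hb =>
    obtain ⟨m, hm⟩ := ha; obtain ⟨n, hn⟩ := hb
    exact ⟨m + n, by push_cast; simp [hm, hn]⟩
  | neg a _ ha =>
    obtain ⟨m, hm⟩ := ha
    exact ⟨-m, by push_cast; simp [hm]⟩


/-- For the Gaussian lattice `Λ = ℤ + ℤi`, `ω = 2 + i` and `ω' = 1 - 2i`, the diagonal
`Δ ⊆ E × E` satisfies `([ω] × [ω'])^[4] Δ = Δ` but `([ω] × [ω'])^[2] Δ ≠ Δ`:
it is pre-periodic with pair `(0, 4)` but not with pair `(0, 2)`. -/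
theorem gaussian_diagonal_period_four_not_two
    (Λ : AddSubgroup ℂ) (hΛ : Λ = AddSubgroup.closure {(1 : ℂ), Complex.I})
    (hω : ∀ x ∈ Λ, (2 + Complex.I) * x ∈ Λ)
    (hω' : ∀ x ∈ Λ, (1 - 2 * Complex.I) * x ∈ Λ) :
    (Prod.map ⇑(mulE Λ (2 + Complex.I) hω) ⇑(mulE Λ (1 - 2 * Complex.I) hω'))^[4] ''
        Set.diagonal (EC Λ) = Set.diagonal (EC Λ) ∧
    (Prod.map ⇑(mulE Λ (2 + Complex.I) hω) ⇑(mulE Λ (1 - 2 * Complex.I) hω'))^[2] ''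
        Set.diagonal (EC Λ) ≠ Set.diagonal (EC Λ) := by
  have hne : ((2 + Complex.I) ^ 4 : ℂ) ≠ 0 :=
    pow_ne_zero 4 (by simp [Complex.ext_iff])
  have hkey4 : ((1 - 2 * Complex.I) ^ 4 : ℂ) = (2 + Complex.I) ^ 4 := by
    simp only [Complex.ext_iff, pow_succ]
    norm_num
  have hkey2 : ((1 - 2 * Complex.I) ^ 2 : ℂ) = -((2 + Complex.I) ^ 2) := by
    simp only [Complex.ext_iff, pow_succ]
    norm_num
  constructor
  · ext ⟨a, b⟩
    constructor
    · rintro ⟨⟨x, y⟩, hd, hf⟩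
      have hxy : x = y := hd
      subst hxy
      obtain ⟨z, rfl⟩ := QuotientAddGroup.mk_surjective x
      simp only [Function.iterate_succ, Function.iterate_zero, Function.comp_apply,
        id_eq, Prod.map_apply, mulE_mk] at hf
      have h1 : ((2 + Complex.I) * ((2 + Complex.I) * ((2 + Complex.I) * ((2 + Complex.I) * z)))
          : ℂ) = (2 + Complex.I) ^ 4 * z := by ring
      have h2 : ((1 - 2 * Complex.I) * ((1 - 2 * Complex.I) * ((1 - 2 * Complex.I) *
          ((1 - 2 * Complex.I) * z))) : ℂ) = (2 + Complex.I) ^ 4 * z := by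
        rw [← hkey4]; ring
      rw [h1, h2, Prod.mk.injEq] at hf
      rw [← hf.1, ← hf.2]
      exact rfl
    · rintro (h : a = b)
      subst h
      obtain ⟨w, rfl⟩ := QuotientAddGroup.mk_surjective a
      refine ⟨((w / (2 + Complex.I) ^ 4 : ℂ), (w / (2 + Complex.I) ^ 4 : ℂ)), rfl, ?_⟩
      simp only [Function.iterate_succ, Function.iterate_zero, Function.comp_apply,
        id_eq, Prod.map_apply, mulE_mk]
      have h1 : ((2 + Complex.I) * ((2 + Complex.I) * ((2 + Complex.I) * ((2 + Complex.I) *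
          (w / (2 + Complex.I) ^ 4)))) : ℂ) = w := by
          rw [show ((2 + Complex.I) * ((2 + Complex.I) * ((2 + Complex.I) * ((2 + Complex.I) *
            (w / (2 + Complex.I) ^ 4)))) : ℂ) = (2 + Complex.I) ^ 4 * w / (2 + Complex.I) ^ 4 by ring]
          exact mul_div_cancel_left₀ w hne
      have h2 : ((1 - 2 * Complex.I) * ((1 - 2 * Complex.I) * ((1 - 2 * Complex.I) *
          ((1 - 2 * Complex.I) * (w / (2 + Complex.I) ^ 4)))) : ℂ) = w := by
        have : ((1 - 2 * Complex.I) * ((1 - 2 * Complex.I) * ((1 - 2 * Complex.I) *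
            ((1 - 2 * Complex.I) * (w / (2 + Complex.I) ^ 4)))) : ℂ)
            = (1 - 2 * Complex.I) ^ 4 * (w / (2 + Complex.I) ^ 4) := by ring
        rw [this, hkey4, ← mul_div_assoc]; exact mul_div_cancel_left₀ w hne
      rw [h1, h2]
  · intro h
    have hmem : ((((1 : ℂ)/4 : ℂ) : ℂ ⧸ Λ), (((1 : ℂ)/4 : ℂ) : ℂ ⧸ Λ)) ∈
        Set.diagonal (EC Λ) := rfl
    rw [← h] at hmem
    obtain ⟨⟨x, y⟩, hd, hf⟩ := hmem
    have hxy : x = y := hd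
    subst hxy
    obtain ⟨z, rfl⟩ := QuotientAddGroup.mk_surjective x
    simp only [Function.iterate_succ, Function.iterate_zero, Function.comp_apply,
      id_eq, Prod.map_apply, mulE_mk] at hf
    have h1 : ((2 + Complex.I) * ((2 + Complex.I) * z) : ℂ) = (2 + Complex.I) ^ 2 * z := by ring
    have h2 : ((1 - 2 * Complex.I) * ((1 - 2 * Complex.I) * z) : ℂ)
        = -((2 + Complex.I) ^ 2 * z) := by rw [← neg_mul, ← hkey2]; ring
    rw [h1] at hf
    rw [h2, Prod.mk.injEq] at hf
    have e1 := hf.1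
    have e2 := hf.2
    rw [QuotientAddGroup.eq] at e1 e2
    have hsum := Λ.add_mem e1 e2
    have : (-((2 + Complex.I) ^ 2 * z) + 1/4) + (-(-((2 + Complex.I) ^ 2 * z)) + 1/4)
        = (1/2 : ℂ) := by ring
    rw [this] at hsum
    rw [hΛ] at hsum
    obtain ⟨n, hn⟩ := re_int_of_mem_closure hsum
    have : ((1:ℂ)/2).re = 1/2 := by norm_num
    rw [this] at hn
    have : (2 : ℝ) * n = 1 := by rw [← hn]; ring
    have : (2 * n : ℤ) = 1 := by exact_mod_cast this
    omega
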